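/- Let N, M ≥ 1, let Θ ∈ ℂ^{M×M} be Hermitian positive semidefinite, let D̂ ∈ ℂ^{N×M}, let ε > 0, and let d be a real number. Then (D̂ + Δ) Θ (D̂ + Δ)^H − d·I_N ⪰ 0 holds for every Δ ∈ ℂ^{N×M} with Frobenius norm ‖Δ‖_F ≤ ε if and only if there exists a real number q ≥ 0 such that the block matrix [[D̂ Θ D̂^H − (q + d)·I_N, D̂ Θ], [Θ D̂^H, Θ + (q/ε²)·I_M]] is positive semidefinite. -/

import Mathlib

open Matrix
open scoped ComplexOrder

namespace RQI
variable {n : Type*} [Fintype n]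

noncomputable def qf (A : Matrix n n ℂ) (v : n → ℂ) : ℝ := (star v ⬝ᵥ (A *ᵥ v)).re

lemma star_qf {A : Matrix n n ℂ} (hA : A.IsHermitian) (v w : n → ℂ) :
    star (star v ⬝ᵥ (A *ᵥ w)) = star w ⬝ᵥ (A *ᵥ v) := by
  rw [star_dotProduct, star_star, star_mulVec, hA.eq, dotProduct_mulVec]

lemma qf_im {A : Matrix n n ℂ} (hA : A.IsHermitian) (v : n → ℂ) :
    (star v ⬝ᵥ (A *ᵥ v)).im = 0 := by
  have := star_qf hA v v
  rw [Complex.ext_iff] at this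
  have h2 := this.2
  simp only [Complex.star_def, Complex.conj_im] at h2
  linarith

lemma nonneg_iff_qf {A : Matrix n n ℂ} (hA : A.IsHermitian) (v : n → ℂ) :
    0 ≤ star v ⬝ᵥ (A *ᵥ v) ↔ 0 ≤ qf A v := by
  rw [Complex.nonneg_iff, qf]
  simp [qf_im hA v]

lemma posSemidef_iff_qf {A : Matrix n n ℂ} (hA : A.IsHermitian) :
    A.PosSemidef ↔ ∀ v, 0 ≤ qf A v := by
  constructor
  · intro h v; exact (nonneg_iff_qf hA v).1 (h.dotProduct_mulVec_nonneg v)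
  · intro h; exact .of_dotProduct_mulVec_nonneg hA (fun v => (nonneg_iff_qf hA v).2 (h v))

lemma qf_smul (A : Matrix n n ℂ) (c : ℝ) (v : n → ℂ) :
    qf A ((c : ℂ) • v) = c ^ 2 * qf A v := by
  unfold qf
  rw [star_smul, mulVec_smul, smul_dotProduct, dotProduct_smul]
  simp
  ring

lemma qf_add_smul {A : Matrix n n ℂ} (hA : A.IsHermitian) (v w : n → ℂ) (ζ : ℂ)
    (hζ : ζ * star ζ = 1) :
    qf A (v + ζ • w) = qf A v + qf A w + 2 * (ζ * (star v ⬝ᵥ (A *ᵥ w))).re := by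
  unfold qf
  have h1 : star w ⬝ᵥ (A *ᵥ v) = star (star v ⬝ᵥ (A *ᵥ w)) := (star_qf hA v w).symm
  have key : star (v + ζ • w) ⬝ᵥ (A *ᵥ (v + ζ • w)) =
      star v ⬝ᵥ (A *ᵥ v) + star w ⬝ᵥ (A *ᵥ w) +
      (ζ * (star v ⬝ᵥ (A *ᵥ w)) + star (ζ * (star v ⬝ᵥ (A *ᵥ w)))) := by
    rw [star_add, mulVec_add, star_smul, mulVec_smul, dotProduct_add, add_dotProduct,
      add_dotProduct, smul_dotProduct, dotProduct_smul, dotProduct_smul, smul_dotProduct]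
    simp only [smul_eq_mul, h1, star_mul']
    have hζ' : star ζ * ζ = 1 := by rw [mul_comm] at hζ; exact hζ
    have hw : ζ * (star ζ * (star w ⬝ᵥ (A *ᵥ w))) = star w ⬝ᵥ (A *ᵥ w) := by
      rw [← mul_assoc, hζ, one_mul]
    rw [hw]; ring
  rw [key]
  simp [Complex.add_re, Complex.star_def, Complex.conj_re]
  ring


noncomputable def jr (A B : Matrix n n ℂ) : Set (ℝ × ℝ) :=
  Set.range (fun v : n → ℂ => (qf A v, qf B v))

variable {A B : Matrix n n ℂ}

lemma qf_zero (A : Matrix n n ℂ) : qf A (0 : n → ℂ) = 0 := by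
  simp [qf]

lemma add_mem_jr (hA : A.IsHermitian) (hB : B.IsHermitian) {p r : ℝ × ℝ}
    (hp : p ∈ jr A B) (hr : r ∈ jr A B) : p + r ∈ jr A B := by
  obtain ⟨v, hv⟩ := hp
  obtain ⟨w, hw⟩ := hr
  set s : ℝ × ℝ := p + r with hs
  by_cases hs0 : s = 0
  · exact ⟨0, by simp [qf_zero, hs0]⟩
  set sA := star v ⬝ᵥ (A *ᵥ w) with hsA
  set sB := star v ⬝ᵥ (B *ᵥ w) with hsB
  set φ : ℝ → ℝ := fun θ =>
    -s.2 * (Complex.exp (θ • Complex.I) * sA).re + s.1 * (Complex.exp (θ • Complex.I) * sB).re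
    with hφ
  have hcont : Continuous φ := by
    rw [hφ]; fun_prop
  have hneg : φ Real.pi = -φ 0 := by
    simp only [hφ, Complex.real_smul, Complex.ofReal_zero, zero_mul, Complex.exp_zero, one_mul,
      Complex.exp_pi_mul_I, neg_mul, neg_one_mul, Complex.neg_re]
    ring
  have hzero : ∃ θ, φ θ = 0 := by
    have h0 : (0 : ℝ) ∈ Set.uIcc (φ 0) (φ Real.pi) := by
      rw [hneg, Set.mem_uIcc]
      rcases le_or_gt 0 (φ 0) with h | h
      · right; constructor <;> linarith
      · left; constructor <;> linarith
    obtain ⟨θ, _, hθ2⟩ := intermediate_value_uIcc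
      (a := (0:ℝ)) (b := Real.pi) (f := φ) hcont.continuousOn h0
    exact ⟨θ, hθ2⟩
  obtain ⟨θ, hθ⟩ := hzero
  set ζ₀ : ℂ := Complex.exp (θ • Complex.I) with hζ₀
  have hunit : ζ₀ * star ζ₀ = 1 := by
    rw [Complex.star_def, Complex.mul_conj]
    norm_cast
    rw [Complex.normSq_eq_norm_sq]
    simp [hζ₀, Complex.real_smul, Complex.norm_exp]
  set u : ℝ × ℝ := ((ζ₀ * sA).re, (ζ₀ * sB).re) with hu
  have hu1 : u.1 = (ζ₀ * sA).re := rfl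
  have hu2 : u.2 = (ζ₀ * sB).re := rfl
  have hortho : -s.2 * u.1 + s.1 * u.2 = 0 := hθ
  have hex : ∃ μ : ℝ, u.1 = μ * s.1 ∧ u.2 = μ * s.2 := by
    by_cases h1 : s.1 ≠ 0
    · refine ⟨u.1 / s.1, by rw [div_mul_cancel₀ _ h1], ?_⟩
      rw [div_mul_eq_mul_div, eq_div_iff h1]
      linarith [hortho]
    · push_neg at h1
      have h2 : s.2 ≠ 0 := fun h2 => hs0 (Prod.ext h1 h2)
      refine ⟨u.2 / s.2, ?_, by rw [div_mul_cancel₀ _ h2]⟩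
      rw [div_mul_eq_mul_div, eq_div_iff h2]
      linarith [hortho]
  obtain ⟨μ, hμ1, hμ2⟩ := hex
  have hex2 : ∃ (μ' : ℝ) (ζ : ℂ), 0 < 1 + 2 * μ' ∧ ζ * star ζ = 1 ∧
      (ζ * sA).re = μ' * s.1 ∧ (ζ * sB).re = μ' * s.2 := by
    rcases lt_or_ge 0 (1 + 2*μ) with h | h
    · exact ⟨μ, ζ₀, h, hunit, hu1 ▸ hμ1, hu2 ▸ hμ2⟩
    · refine ⟨-μ, -ζ₀, by linarith, by simpa using hunit, ?_, ?_⟩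
      · rw [neg_mul, Complex.neg_re, ← hu1, hμ1]; ring
      · rw [neg_mul, Complex.neg_re, ← hu2, hμ2]; ring
  obtain ⟨μ', ζ, hpos, hunit', huA, huB⟩ := hex2
  set α : ℝ := Real.sqrt (1 + 2*μ')⁻¹ with hα
  refine ⟨(α : ℂ) • (v + ζ • w), ?_⟩
  have hα2 : α ^ 2 = (1 + 2*μ')⁻¹ := Real.sq_sqrt (by positivity)
  have eA : qf A ((α : ℂ) • (v + ζ • w)) = s.1 := by
    rw [qf_smul, qf_add_smul hA v w ζ hunit', huA, hα2]
    have : qf A v + qf A w = s.1 := by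
      rw [hs, ← hv, ← hw]; rfl
    rw [this]
    field_simp
  have eB : qf B ((α : ℂ) • (v + ζ • w)) = s.2 := by
    rw [qf_smul, qf_add_smul hB v w ζ hunit', huB, hα2]
    have : qf B v + qf B w = s.2 := by
      rw [hs, ← hv, ← hw]; rfl
    rw [this]
    field_simp
  simp only []
  rw [eA, eB]


lemma smul_mem_jr (c : ℝ) (hc : 0 ≤ c) {p : ℝ × ℝ} (hp : p ∈ jr A B) : c • p ∈ jr A B := by
  obtain ⟨v, hv⟩ := hp
  refine ⟨(Real.sqrt c : ℂ) • v, ?_⟩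
  simp only [qf_smul, Real.sq_sqrt hc]
  rw [← hv]
  rfl

lemma convex_jr (hA : A.IsHermitian) (hB : B.IsHermitian) : Convex ℝ (jr A B) := by
  intro p hp r hr a b ha hb _
  exact add_mem_jr hA hB (smul_mem_jr a ha hp) (smul_mem_jr b hb hr)

theorem slemma (hA : A.IsHermitian) (hB : B.IsHermitian)
    (v₀ : n → ℂ) (hslater : 0 < qf B v₀)
    (h : ∀ v, 0 ≤ qf B v → 0 ≤ qf A v) :
    ∃ q : ℝ, 0 ≤ q ∧ ∀ v, 0 ≤ qf A v - q * qf B v := by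
  set K : Set (ℝ × ℝ) := {x | x.1 < 0 ∧ 0 < x.2} with hK
  have hKopen : IsOpen K := by
    have : K = (Prod.fst ⁻¹' Set.Iio 0) ∩ (Prod.snd ⁻¹' Set.Ioi 0) := rfl
    rw [this]
    exact ((isOpen_Iio).preimage continuous_fst).inter ((isOpen_Ioi).preimage continuous_snd)
  have hfstlin : IsLinearMap ℝ (Prod.fst : ℝ × ℝ → ℝ) := ⟨fun _ _ => rfl, fun _ _ => rfl⟩
  have hsndlin : IsLinearMap ℝ (Prod.snd : ℝ × ℝ → ℝ) := ⟨fun _ _ => rfl, fun _ _ => rfl⟩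
  have hKconv : Convex ℝ K :=
    (convex_halfSpace_lt hfstlin 0).inter (convex_halfSpace_gt hsndlin 0)
  have hdisj : Disjoint K (jr A B) := by
    rw [Set.disjoint_left]
    rintro x ⟨hx1, hx2⟩ ⟨v, hv⟩
    have h1 : qf A v = x.1 := congrArg Prod.fst hv
    have h2 : qf B v = x.2 := congrArg Prod.snd hv
    have := h v (by rw [h2]; exact le_of_lt hx2)
    rw [h1] at this
    linarith
  obtain ⟨f, u, hKlt, hWge⟩ := geometric_hahn_banach_open hKconv hKopen
    (convex_jr hA hB) hdisj
  set c1 : ℝ := f (1, 0) with hc1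
  set c2 : ℝ := f (0, 1) with hc2
  have hfx : ∀ x : ℝ × ℝ, f x = x.1 * c1 + x.2 * c2 := by
    intro x
    have hxe : x = x.1 • ((1:ℝ), (0:ℝ)) + x.2 • ((0:ℝ), (1:ℝ)) := by
      ext <;> simp
    calc f x = f (x.1 • ((1:ℝ), (0:ℝ)) + x.2 • ((0:ℝ), (1:ℝ))) := by rw [← hxe]
    _ = x.1 * c1 + x.2 * c2 := by
        rw [map_add, f.map_smul, f.map_smul, smul_eq_mul, smul_eq_mul, hc1, hc2]
  have h0W : (0 : ℝ × ℝ) ∈ jr A B := ⟨0, by simp [qf_zero]⟩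
  have hu0 : u ≤ 0 := by simpa [hfx] using hWge _ h0W
  have hc1nonneg : 0 ≤ c1 := by
    by_contra hc
    push_neg at hc
    set t : ℝ := (|u| + |c2| + 1) / (-c1) with ht
    have htpos : 0 < t := by
      apply div_pos (by positivity) (by linarith)
    have hKm : ((-t : ℝ), (1:ℝ)) ∈ K := ⟨by simpa using htpos, one_pos⟩
    have := hKlt _ hKm
    rw [hfx] at this
    simp only at this
    have hc1ne : c1 ≠ 0 := ne_of_lt hc
    have htc : -t * c1 = |u| + |c2| + 1 := by
      rw [ht, div_neg, neg_neg, div_mul_cancel₀ _ hc1ne]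
    rw [htc] at this
    have := le_abs_self u
    have := neg_abs_le c2
    linarith
  have hc2nonpos : c2 ≤ 0 := by
    by_contra hc
    push_neg at hc
    set t : ℝ := (|u| + |c1| + 1) / c2 with ht
    have htpos : 0 < t := div_pos (by positivity) hc
    have hKm : ((-1 : ℝ), t) ∈ K := ⟨by norm_num, htpos⟩
    have := hKlt _ hKm
    rw [hfx] at this
    simp only at this
    have htc : t * c2 = |u| + |c1| + 1 := by
      rw [ht]; field_simp
    rw [htc] at this
    have := le_abs_self u
    have := neg_abs_le c1
    have := le_abs_self c1
    linarith
  have hWnonneg : ∀ v : n → ℂ, 0 ≤ c1 * qf A v + c2 * qf B v := by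
    intro v
    by_contra hneg
    push_neg at hneg
    set val : ℝ := c1 * qf A v + c2 * qf B v with hval
    set m : ℝ := (|u| + 1) / (-val) with hm
    have hmpos : 0 < m := div_pos (by positivity) (by linarith)
    have hmem : m • ((qf A v, qf B v) : ℝ × ℝ) ∈ jr A B :=
      smul_mem_jr m (le_of_lt hmpos) ⟨v, rfl⟩
    have := hWge _ hmem
    rw [hfx] at this
    simp only [Prod.smul_fst, Prod.smul_snd, smul_eq_mul] at this
    have hcalc : m * qf A v * c1 + m * qf B v * c2 = -(|u| + 1) := by
      have h9 : m * qf A v * c1 + m * qf B v * c2 = m * val := by rw [hval]; ring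
      have hvalne : val ≠ 0 := ne_of_lt hneg
      rw [h9, hm, div_neg, neg_mul, div_mul_cancel₀ _ hvalne]
    rw [hcalc] at this
    have := le_abs_self u
    have := neg_abs_le u
    linarith
  have hc1pos : 0 < c1 := by
    rcases lt_or_eq_of_le hc1nonneg with h' | h'
    · exact h'
    · exfalso
      have hc2neg : c2 < 0 := by
        rcases lt_or_eq_of_le hc2nonpos with h'' | h''
        · exact h''
        · exfalso
          have hKm : ((-1 : ℝ), (1:ℝ)) ∈ K := ⟨by norm_num, one_pos⟩
          have := hKlt _ hKm
          rw [hfx] at this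
          simp only at this
          rw [← h', ← h''] at this
          simp at this
          linarith
      have := hWnonneg v₀
      rw [← h'] at this
      simp at this
      nlinarith
  refine ⟨-c2 / c1, div_nonneg (by linarith) (le_of_lt hc1pos), fun v => ?_⟩
  have := hWnonneg v
  have hq : qf A v - (-c2 / c1) * qf B v = (c1 * qf A v + c2 * qf B v) / c1 := by
    field_simp
    ring
  rw [hq]
  exact div_nonneg this (le_of_lt hc1pos)


end RQI

/-- The Frobenius norm of a complex matrix. -/
noncomputable def frobeniusNorm {N M : ℕ} (Δ : Matrix (Fin N) (Fin M) ℂ) : ℝ :=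
  Real.sqrt (∑ i, ∑ j, ‖Δ i j‖ ^ 2)

namespace RQI

noncomputable def enorm {k : Type*} [Fintype k] (x : k → ℂ) : ℝ := ∑ i, ‖x i‖ ^ 2

lemma enorm_nonneg {k : Type*} [Fintype k] (x : k → ℂ) : 0 ≤ enorm x :=
  Finset.sum_nonneg fun _ _ => sq_nonneg _

lemma enorm_eq_zero {k : Type*} [Fintype k] {x : k → ℂ} (h : enorm x ≤ 0) : x = 0 := by
  have h0 : enorm x = 0 := le_antisymm h (enorm_nonneg x)
  funext i
  have h1 := (Finset.sum_eq_zero_iff_of_nonneg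
    (fun i _ => sq_nonneg ‖x i‖)).1 h0 i (Finset.mem_univ i)
  have h2 : ‖x i‖ = 0 := sq_eq_zero_iff.1 h1
  simpa using h2

lemma star_conj_mul (z : ℂ) : star z * z = ((‖z‖ : ℝ) : ℂ) ^ 2 := by
  rw [Complex.star_def, mul_comm, Complex.mul_conj, Complex.normSq_eq_norm_sq]
  norm_cast

lemma star_dot_self {k : Type*} [Fintype k] (x : k → ℂ) : star x ⬝ᵥ x = ((enorm x : ℝ) : ℂ) := by
  rw [dotProduct, enorm]
  push_cast
  exact Finset.sum_congr rfl fun i _ => star_conj_mul (x i)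

section App
variable {N M : ℕ} (Θ : Matrix (Fin M) (Fin M) ℂ) (Dh : Matrix (Fin N) (Fin M) ℂ) (ε d : ℝ)

noncomputable def Amat : Matrix (Fin N ⊕ Fin M) (Fin N ⊕ Fin M) ℂ :=
  fromBlocks (Dh * Θ * Dhᴴ - (d : ℂ) • 1) (Dh * Θ) (Θ * Dhᴴ) Θ

noncomputable def Bmat (N M : ℕ) (ε : ℝ) : Matrix (Fin N ⊕ Fin M) (Fin N ⊕ Fin M) ℂ :=
  fromBlocks 1 0 0 (-(((ε ^ 2)⁻¹ : ℝ) : ℂ) • 1)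

lemma herm_real_smul_one {k : Type*} [Fintype k] [DecidableEq k] (c : ℝ) :
    ((c : ℂ) • (1 : Matrix k k ℂ)).IsHermitian := by
  unfold Matrix.IsHermitian
  rw [conjTranspose_smul, conjTranspose_one]
  congr 1
  simp

lemma hermA (hΘ : Θ.IsHermitian) : (Amat Θ Dh d).IsHermitian := by
  apply Matrix.IsHermitian.fromBlocks
  · exact ((Matrix.isHermitian_mul_mul_conjTranspose Dh hΘ)).sub (herm_real_smul_one d)
  · rw [conjTranspose_mul, hΘ.eq]
  · exact hΘ

lemma hermB : (Bmat N M ε).IsHermitian := by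
  apply Matrix.IsHermitian.fromBlocks
  · exact Matrix.isHermitian_one
  · simp
  · have := herm_real_smul_one (k := Fin M) (-(ε ^ 2)⁻¹)
    simpa using this

lemma quad_block (P : Matrix (Fin N) (Fin N) ℂ) (Q : Matrix (Fin N) (Fin M) ℂ)
    (R : Matrix (Fin M) (Fin N) ℂ) (S : Matrix (Fin M) (Fin M) ℂ)
    (x : Fin N → ℂ) (y : Fin M → ℂ) :
    star (Sum.elim x y) ⬝ᵥ (fromBlocks P Q R S *ᵥ Sum.elim x y) =
      star x ⬝ᵥ (P *ᵥ x) + star x ⬝ᵥ (Q *ᵥ y) + star y ⬝ᵥ (R *ᵥ x) + star y ⬝ᵥ (S *ᵥ y) := by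
  have hstar : star (Sum.elim x y) = Sum.elim (star x) (star y) := by
    funext i; cases i <;> rfl
  rw [fromBlocks_mulVec, hstar, sumElim_dotProduct_sumElim, dotProduct_add, dotProduct_add]
  simp only [Sum.elim_comp_inl, Sum.elim_comp_inr]
  ring

lemma quad_conj (E : Matrix (Fin N) (Fin M) ℂ) (x : Fin N → ℂ) :
    star x ⬝ᵥ ((E * Θ * Eᴴ) *ᵥ x) = star (Eᴴ *ᵥ x) ⬝ᵥ (Θ *ᵥ (Eᴴ *ᵥ x)) := by
  rw [star_mulVec, conjTranspose_conjTranspose, Matrix.mul_assoc, ← mulVec_mulVec,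
    dotProduct_mulVec (star x), mulVec_mulVec]

lemma quad_expand (x : Fin N → ℂ) (y : Fin M → ℂ) :
    star (Dhᴴ *ᵥ x + y) ⬝ᵥ (Θ *ᵥ (Dhᴴ *ᵥ x + y)) =
      star x ⬝ᵥ ((Dh * Θ * Dhᴴ) *ᵥ x) + star x ⬝ᵥ ((Dh * Θ) *ᵥ y) +
      star y ⬝ᵥ ((Θ * Dhᴴ) *ᵥ x) + star y ⬝ᵥ (Θ *ᵥ y) := by
  have t12 : star (Dhᴴ *ᵥ x) ⬝ᵥ (Θ *ᵥ y) = star x ⬝ᵥ ((Dh * Θ) *ᵥ y) := by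
    rw [star_mulVec, conjTranspose_conjTranspose, ← mulVec_mulVec, dotProduct_mulVec (star x)]
  have t21 : star y ⬝ᵥ (Θ *ᵥ (Dhᴴ *ᵥ x)) = star y ⬝ᵥ ((Θ * Dhᴴ) *ᵥ x) := by
    rw [mulVec_mulVec]
  rw [star_add, mulVec_add, dotProduct_add, add_dotProduct, add_dotProduct,
    ← quad_conj Θ Dh x, t12, t21]
  ring

lemma quadA_eq (x : Fin N → ℂ) (y : Fin M → ℂ) :
    star (Sum.elim x y) ⬝ᵥ (Amat Θ Dh d *ᵥ Sum.elim x y) =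
      star (Dhᴴ *ᵥ x + y) ⬝ᵥ (Θ *ᵥ (Dhᴴ *ᵥ x + y)) - (d : ℂ) * ((enorm x : ℝ) : ℂ) := by
  rw [Amat, quad_block, quad_expand]
  rw [sub_mulVec, dotProduct_sub, smul_mulVec, one_mulVec, dotProduct_smul,
    star_dot_self, smul_eq_mul]
  ring

lemma qfA_eq (x : Fin N → ℂ) (y : Fin M → ℂ) :
    qf (Amat Θ Dh d) (Sum.elim x y) = qf Θ (Dhᴴ *ᵥ x + y) - d * enorm x := by
  unfold qf
  rw [quadA_eq]
  rw [Complex.sub_re]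
  norm_cast

lemma qfB_eq (x : Fin N → ℂ) (y : Fin M → ℂ) :
    qf (Bmat N M ε) (Sum.elim x y) = enorm x - (ε ^ 2)⁻¹ * enorm y := by
  unfold qf Bmat
  rw [quad_block]
  rw [one_mulVec, zero_mulVec, zero_mulVec, dotProduct_zero, dotProduct_zero,
    star_dot_self, smul_mulVec, one_mulVec, dotProduct_smul, star_dot_self, smul_eq_mul]
  have h : (-(((ε ^ 2)⁻¹ : ℝ) : ℂ)) * ((enorm y : ℝ) : ℂ) = (((-((ε ^ 2)⁻¹ * enorm y) : ℝ)) : ℂ) := by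
    push_cast; ring
  rw [h]
  simp only [add_zero, ← Complex.ofReal_add, Complex.ofReal_re]
  ring

lemma quadE_eq (E : Matrix (Fin N) (Fin M) ℂ) (x : Fin N → ℂ) :
    qf (E * Θ * Eᴴ - (d : ℂ) • 1) x = qf Θ (Eᴴ *ᵥ x) - d * enorm x := by
  unfold qf
  rw [sub_mulVec, dotProduct_sub, smul_mulVec, one_mulVec, dotProduct_smul,
    star_dot_self, smul_eq_mul, quad_conj]
  rw [Complex.sub_re]
  norm_cast

lemma qf_sub_smul (q : ℝ) (C E : Matrix (Fin N ⊕ Fin M) (Fin N ⊕ Fin M) ℂ)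
    (v : Fin N ⊕ Fin M → ℂ) :
    qf (C - (q : ℂ) • E) v = qf C v - q * qf E v := by
  unfold qf
  rw [sub_mulVec, dotProduct_sub, smul_mulVec, dotProduct_smul, smul_eq_mul,
    Complex.sub_re, Complex.re_ofReal_mul]

lemma block_eq (q : ℝ) :
    (Matrix.fromBlocks
        (Dh * Θ * Dhᴴ - ((q + d : ℝ) : ℂ) • (1 : Matrix (Fin N) (Fin N) ℂ))
        (Dh * Θ)
        (Θ * Dhᴴ)
        (Θ + ((q / ε ^ 2 : ℝ) : ℂ) • (1 : Matrix (Fin M) (Fin M) ℂ))) =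
      Amat Θ Dh d - (q : ℂ) • Bmat N M ε := by
  unfold Amat Bmat
  ext i j
  rcases i with i | i <;> rcases j with j | j <;>
    simp only [Matrix.fromBlocks_apply₁₁, Matrix.fromBlocks_apply₁₂, Matrix.fromBlocks_apply₂₁,
      Matrix.fromBlocks_apply₂₂, Matrix.sub_apply, Matrix.add_apply, Matrix.smul_apply,
      Matrix.one_apply, Matrix.neg_apply, Matrix.zero_apply, smul_eq_mul] <;>
    push_cast <;> first | (split_ifs <;> ring) | ring

-- Frobenius norm bounds
lemma fro_sq {Δ : Matrix (Fin N) (Fin M) ℂ} :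
    (frobeniusNorm Δ) ^ 2 = ∑ i, ∑ j, ‖Δ i j‖ ^ 2 := by
  rw [frobeniusNorm, Real.sq_sqrt]
  exact Finset.sum_nonneg fun i _ => Finset.sum_nonneg fun j _ => sq_nonneg _

lemma enorm_mulVec_le (Δ : Matrix (Fin N) (Fin M) ℂ) (x : Fin N → ℂ) :
    enorm (Δᴴ *ᵥ x) ≤ (frobeniusNorm Δ) ^ 2 * enorm x := by
  rw [fro_sq, Finset.sum_comm]
  unfold enorm
  rw [Finset.sum_mul]
  apply Finset.sum_le_sum
  intro j _
  have h1 : ‖(Δᴴ *ᵥ x) j‖ ≤ ∑ i, ‖Δ i j‖ * ‖x i‖ := by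
    rw [mulVec, dotProduct]
    refine (norm_sum_le _ _).trans ?_
    apply Finset.sum_le_sum
    intro i _
    rw [norm_mul, conjTranspose_apply, norm_star]
  have h2 : ‖(Δᴴ *ᵥ x) j‖ ^ 2 ≤ (∑ i, ‖Δ i j‖ * ‖x i‖) ^ 2 := by
    apply sq_le_sq' _ h1
    have := norm_nonneg ((Δᴴ *ᵥ x) j)
    have := Finset.sum_nonneg (s := Finset.univ)
      (fun i (_ : i ∈ Finset.univ) => mul_nonneg (norm_nonneg (Δ i j)) (norm_nonneg (x i)))
    linarith
  refine h2.trans ?_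
  exact Finset.sum_mul_sq_le_sq_mul_sq Finset.univ _ _

lemma exists_rank_one (x : Fin N → ℂ) (y : Fin M → ℂ) (hx : enorm x ≠ 0) :
    ∃ Δ : Matrix (Fin N) (Fin M) ℂ,
      Δᴴ *ᵥ x = y ∧ (frobeniusNorm Δ) ^ 2 = enorm y / enorm x := by
  set c : ℝ := enorm x with hc
  have hcpos : 0 < c := lt_of_le_of_ne (enorm_nonneg x) (Ne.symm hx)
  refine ⟨Matrix.of (fun i j => ((c⁻¹ : ℝ) : ℂ) * x i * star (y j)), ?_, ?_⟩
  · funext j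
    show ∑ i, (Matrix.of (fun i j => ((c⁻¹ : ℝ) : ℂ) * x i * star (y j)))ᴴ j i * x i = y j
    have step : ∀ i, (Matrix.of (fun i j => ((c⁻¹ : ℝ) : ℂ) * x i * star (y j)))ᴴ j i * x i
        = ((c⁻¹ : ℝ) : ℂ) * y j * (star x i * x i) := by
      intro i
      rw [conjTranspose_apply, Matrix.of_apply]
      simp only [star_mul', star_star, Complex.star_def, Complex.conj_ofReal, Pi.star_apply,
        Complex.conj_conj]
      ring
    rw [Finset.sum_congr rfl (fun i _ => step i), ← Finset.mul_sum]
    have hdot : ∑ i, star x i * x i = ((c : ℝ) : ℂ) := by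
      rw [← star_dot_self x, dotProduct]
    rw [hdot, mul_assoc, mul_comm (y j), ← mul_assoc]
    have : ((c⁻¹ : ℝ) : ℂ) * ((c : ℝ) : ℂ) = 1 := by
      norm_cast
      exact inv_mul_cancel₀ hx
    rw [this, one_mul]
  · rw [fro_sq]
    have step : ∀ (i : Fin N) (j : Fin M),
        ‖(Matrix.of (fun i j => ((c⁻¹ : ℝ) : ℂ) * x i * star (y j))) i j‖ ^ 2
        = c⁻¹ ^ 2 * (‖x i‖ ^ 2 * ‖y j‖ ^ 2) := by
      intro i j
      rw [Matrix.of_apply, norm_mul, norm_mul, norm_star, Complex.norm_real,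
        Real.norm_eq_abs, abs_of_pos (inv_pos.2 hcpos)]
      ring
    simp_rw [step]
    have hxsum : ∑ i : Fin N, ‖x i‖ ^ 2 = c := rfl
    have e1 : ∀ i : Fin N, ∑ j : Fin M, c⁻¹ ^ 2 * (‖x i‖ ^ 2 * ‖y j‖ ^ 2)
        = (c⁻¹ ^ 2 * ‖x i‖ ^ 2) * enorm y := by
      intro i
      simp_rw [← mul_assoc]
      rw [← Finset.mul_sum]
      rfl
    rw [Finset.sum_congr rfl (fun i _ => e1 i)]
    have e2 : ∑ i : Fin N, (c⁻¹ ^ 2 * ‖x i‖ ^ 2) * enorm y = (c⁻¹ ^ 2 * c) * enorm y := by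
      rw [← Finset.sum_mul, ← Finset.mul_sum, hxsum]
    rw [e2]
    field_simp

end App
end RQI

open RQI in
theorem robust_qmi_iff_lmi {N M : ℕ} (hN : 1 ≤ N) (hM : 1 ≤ M)
    (Θ : Matrix (Fin M) (Fin M) ℂ) (hΘ : Θ.PosSemidef)
    (Dh : Matrix (Fin N) (Fin M) ℂ) (ε : ℝ) (hε : 0 < ε) (d : ℝ) :
    (∀ Δ : Matrix (Fin N) (Fin M) ℂ, frobeniusNorm Δ ≤ ε →
      ((Dh + Δ) * Θ * (Dh + Δ)ᴴ - (d : ℂ) • (1 : Matrix (Fin N) (Fin N) ℂ)).PosSemidef) ↔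
    (∃ q : ℝ, 0 ≤ q ∧
      (Matrix.fromBlocks
        (Dh * Θ * Dhᴴ - ((q + d : ℝ) : ℂ) • (1 : Matrix (Fin N) (Fin N) ℂ))
        (Dh * Θ)
        (Θ * Dhᴴ)
        (Θ + ((q / ε ^ 2 : ℝ) : ℂ) • (1 : Matrix (Fin M) (Fin M) ℂ))).PosSemidef) := by
  have hεsq : (0:ℝ) < ε ^ 2 := by positivity
  have hAh : (Amat Θ Dh d).IsHermitian := hermA Θ Dh d hΘ.1
  have hBh : (Bmat N M ε).IsHermitian := hermB ε
  constructor
  · intro h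
    have QA : ∀ v : Fin N ⊕ Fin M → ℂ, 0 ≤ qf (Bmat N M ε) v → 0 ≤ qf (Amat Θ Dh d) v := by
      intro v hv
      set x := v ∘ Sum.inl with hx
      set y := v ∘ Sum.inr with hy
      have hvel : v = Sum.elim x y := by funext i; cases i <;> rfl
      rw [hvel, qfB_eq] at hv
      rw [hvel, qfA_eq]
      by_cases hx0 : RQI.enorm x = 0
      · have hey : RQI.enorm y ≤ 0 := by
          by_contra hey
          push_neg at hey
          have : 0 < (ε^2)⁻¹ * RQI.enorm y := mul_pos (inv_pos.2 hεsq) hey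
          rw [hx0] at hv
          linarith
        have hy0 : y = 0 := enorm_eq_zero hey
        have hx0' : x = 0 := enorm_eq_zero (le_of_eq hx0)
        rw [hx0', hy0]
        simp [qf_zero, RQI.enorm, mulVec_zero]
      · have hexpos : 0 < RQI.enorm x := lt_of_le_of_ne (enorm_nonneg x) (Ne.symm hx0)
        obtain ⟨Δ, hΔy, hΔfro⟩ := exists_rank_one x y hx0
        have key : RQI.enorm y ≤ ε^2 * RQI.enorm x := by
          have h' : (ε^2)⁻¹ * RQI.enorm y ≤ RQI.enorm x := by linarith
          calc RQI.enorm y = ε^2 * ((ε^2)⁻¹ * RQI.enorm y) := by field_simp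
          _ ≤ ε^2 * RQI.enorm x := mul_le_mul_of_nonneg_left h' (le_of_lt hεsq)
        have h1 : (frobeniusNorm Δ)^2 ≤ ε^2 := by
          rw [hΔfro, div_le_iff₀ hexpos]
          exact key
        have h2 : 0 ≤ frobeniusNorm Δ := Real.sqrt_nonneg _
        have hfro : frobeniusNorm Δ ≤ ε := by
          nlinarith [h1, h2, hε]
        have hpsd := h Δ hfro
        have hq := (nonneg_iff_qf hpsd.1 x).1 (hpsd.dotProduct_mulVec_nonneg x)
        rw [quadE_eq] at hq
        rw [conjTranspose_add, add_mulVec, hΔy] at hq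
        exact hq
    have hN0 : (0:ℝ) < N := by exact_mod_cast Nat.lt_of_lt_of_le Nat.zero_lt_one hN
    have hslater : 0 < qf (Bmat N M ε) (Sum.elim (fun _ : Fin N => (1:ℂ)) (0 : Fin M → ℂ)) := by
      rw [qfB_eq]
      have e1 : RQI.enorm (fun _ : Fin N => (1:ℂ)) = N := by simp [RQI.enorm]
      have e2 : RQI.enorm (0 : Fin M → ℂ) = 0 := by simp [RQI.enorm]
      rw [e1, e2]
      simpa using hN0
    obtain ⟨q, hq, hAll⟩ := slemma hAh hBh _ hslater QA
    refine ⟨q, hq, ?_⟩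
    rw [block_eq]
    have hermqB : ((q:ℂ) • Bmat N M ε).IsHermitian := by
      rw [Matrix.IsHermitian, conjTranspose_smul, hBh.eq, Complex.star_def, Complex.conj_ofReal]
    refine (posSemidef_iff_qf (hAh.sub hermqB)).2 ?_
    intro v
    rw [qf_sub_smul]
    linarith [hAll v]
  · rintro ⟨q, hq, hpsd⟩
    rw [block_eq] at hpsd
    intro Δ hΔ
    have hermE : ((Dh + Δ) * Θ * (Dh + Δ)ᴴ - (d:ℂ) • 1).IsHermitian :=
      (Matrix.isHermitian_mul_mul_conjTranspose _ hΘ.1).sub (herm_real_smul_one d)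
    refine .of_dotProduct_mulVec_nonneg hermE fun x => ?_
    apply (nonneg_iff_qf hermE x).2
    rw [quadE_eq]
    set y := Δᴴ *ᵥ x with hy
    rw [conjTranspose_add, add_mulVec, ← hy]
    rw [← qfA_eq Θ Dh d x y]
    have hfroN : 0 ≤ frobeniusNorm Δ := Real.sqrt_nonneg _
    have hfro2 : (frobeniusNorm Δ)^2 ≤ ε^2 := by nlinarith [hΔ, hε]
    have hyb : RQI.enorm y ≤ ε^2 * RQI.enorm x :=
      le_trans (enorm_mulVec_le Δ x) (by nlinarith [enorm_nonneg x])
    have h2 : 0 ≤ qf (Bmat N M ε) (Sum.elim x y) := by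
      rw [qfB_eq, sub_nonneg]
      calc (ε^2)⁻¹ * RQI.enorm y ≤ (ε^2)⁻¹ * (ε^2 * RQI.enorm x) :=
            mul_le_mul_of_nonneg_left hyb (le_of_lt (inv_pos.2 hεsq))
      _ = RQI.enorm x := by field_simp
    have h1 : 0 ≤ qf (Amat Θ Dh d - (q:ℂ) • Bmat N M ε) (Sum.elim x y) :=
      (nonneg_iff_qf hpsd.1 _).1 (hpsd.dotProduct_mulVec_nonneg _)
    rw [qf_sub_smul] at h1
    nlinarith [mul_nonneg hq h2]
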